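/- There exists a constant c ∈ (0,1], depending only on κ, such that the following holds (large cut-off regime, inner inclusion of Lemma 2.4 (2)). Let d ≥ 1, κ > 1, U > 0, t > 0, x_min ≥ (Ut)^{κ/(κ-1)} and x ∈ ℝ^d. Then for every z ∈ ℝ^d with ‖z − x‖ ≤ c·Ut·max(x_min, ‖x‖)^{1/κ}, there exists a differentiable curve y : [0,t] → ℝ^d with y(0) = x, y(t) = z, and ‖y'(s)‖ ≤ U·(x_min + ‖y(s)‖)^{1/κ} for all s ∈ [0,t]. -/

import Mathlib

/-- Lemma 2.4 (2), large cut-off regime, inner inclusion: there is a constant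
`c ∈ (0,1]` depending only on `κ` such that, for a large cut-off
`x_min ≥ (Ut)^{κ/(κ-1)}`, every point `z` with `‖z - x‖ ≤ c·Ut·max(x_min,‖x‖)^{1/κ}`
is reached at time `t` by a curve started at `x` whose speed is bounded by
`U (x_min + ‖·‖)^{1/κ}`. -/
theorem large_cutoff_inner_inclusion (κ : ℝ) (hκ : 1 < κ) :
    ∃ c : ℝ, 0 < c ∧ c ≤ 1 ∧
      ∀ (d : ℕ), 1 ≤ d →
        ∀ U t xmin : ℝ, 0 < U → 0 < t →
          (U * t) ^ (κ / (κ - 1)) ≤ xmin →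
          ∀ x z : EuclideanSpace ℝ (Fin d),
            ‖z - x‖ ≤ c * (U * t) * (max xmin ‖x‖) ^ (1 / κ) →
            ∃ y y' : ℝ → EuclideanSpace ℝ (Fin d),
              y 0 = x ∧ y t = z ∧
              ∀ s ∈ Set.Icc (0 : ℝ) t,
                HasDerivAt y (y' s) s ∧ ‖y' s‖ ≤ U * (xmin + ‖y s‖) ^ (1 / κ) := by
  refine ⟨1/2, by norm_num, by norm_num, ?_⟩
  intro d hd U t xmin hU ht hxm x z hz
  have hκ0 : (0:ℝ) < κ := by linarith
  have hκ1 : (0:ℝ) < κ - 1 := by linarith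
  have hUt : 0 < U * t := mul_pos hU ht
  have hxmin : 0 < xmin := lt_of_lt_of_le (Real.rpow_pos_of_pos hUt _) hxm
  set M : ℝ := max xmin ‖x‖ with hMdef
  have hM0 : 0 < M := lt_max_of_lt_left hxmin
  -- U*t ≤ M^((κ-1)/κ)
  have h1 : U * t ≤ M ^ ((κ-1)/κ) := by
    have e1 : U * t = ((U * t) ^ (κ/(κ-1))) ^ ((κ-1)/κ) := by
      rw [← Real.rpow_mul hUt.le,
        show κ/(κ-1) * ((κ-1)/κ) = 1 by field_simp, Real.rpow_one]
    rw [e1]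
    calc ((U * t) ^ (κ/(κ-1))) ^ ((κ-1)/κ) ≤ xmin ^ ((κ-1)/κ) :=
          Real.rpow_le_rpow (Real.rpow_nonneg hUt.le _) hxm
            (by positivity)
      _ ≤ M ^ ((κ-1)/κ) :=
          Real.rpow_le_rpow hxmin.le (le_max_left _ _) (by positivity)
  have hMpow : 0 ≤ M ^ (1/κ) := Real.rpow_nonneg hM0.le _
  -- U*t*M^(1/κ) ≤ M
  have h2 : U * t * M ^ (1/κ) ≤ M := by
    calc U * t * M ^ (1/κ) ≤ M ^ ((κ-1)/κ) * M ^ (1/κ) :=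
          mul_le_mul_of_nonneg_right h1 hMpow
      _ = M ^ ((κ-1)/κ + 1/κ) := (Real.rpow_add hM0 _ _).symm
      _ = M := by rw [show (κ-1)/κ + 1/κ = 1 by field_simp; ring]; simp
  have hvM : ‖z - x‖ ≤ M / 2 := by nlinarith
  set v : EuclideanSpace ℝ (Fin d) := z - x with hvdef
  refine ⟨fun s => x + (s / t) • v, fun _ => (1/t) • v, ?_, ?_, ?_⟩
  · simp
  · simp only [div_self ht.ne', one_smul, hvdef]; abel
  · intro s hs
    constructor
    · exact (((hasDerivAt_id s).div_const t).smul_const v).const_add x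
    · -- norm bounds
      have hys : ‖(s / t) • v‖ ≤ ‖v‖ := by
        rw [norm_smul]
        have : |s / t| ≤ 1 := by
          rw [abs_of_nonneg (div_nonneg hs.1 ht.le)]
          exact div_le_one_of_le₀ hs.2 ht.le
        calc |s / t| * ‖v‖ ≤ 1 * ‖v‖ :=
            mul_le_mul_of_nonneg_right this (norm_nonneg _)
          _ = ‖v‖ := one_mul _
      have hlow : M / 2 ≤ xmin + ‖x + (s / t) • v‖ := by
        have h3 : ‖x‖ - ‖v‖ ≤ ‖x + (s / t) • v‖ := by
          have h := norm_sub_norm_le x (x + (s / t) • v)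
          rw [show x - (x + (s / t) • v) = -((s/t) • v) by abel, norm_neg] at h
          linarith
        have hMle : M ≤ xmin + ‖x‖ := by
          rcases max_cases xmin ‖x‖ with ⟨h, _⟩ | ⟨h, _⟩ <;>
            simp [hMdef, h] <;> positivity
        have : ‖v‖ ≤ M / 2 := hvM
        linarith
      have hstep : M ^ (1/κ) / 2 ≤ (xmin + ‖x + (s / t) • v‖) ^ (1/κ) := by
        have hhalf : ((1:ℝ)/2) ^ ((1:ℝ)) ≤ ((1:ℝ)/2) ^ (1/κ) := by
          apply Real.rpow_le_rpow_of_exponent_ge (by norm_num) (by norm_num)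
          rw [div_le_one hκ0]; linarith
        have e2 : (M/2) ^ (1/κ) = M ^ (1/κ) * ((1:ℝ)/2) ^ (1/κ) := by
          rw [show M/2 = M * (1/2) by ring, Real.mul_rpow hM0.le (by norm_num)]
        calc M ^ (1/κ) / 2 = M ^ (1/κ) * ((1:ℝ)/2) ^ ((1:ℝ)) := by
              rw [Real.rpow_one]; ring
          _ ≤ M ^ (1/κ) * ((1:ℝ)/2) ^ (1/κ) :=
              mul_le_mul_of_nonneg_left hhalf hMpow
          _ = (M/2) ^ (1/κ) := e2.symm
          _ ≤ (xmin + ‖x + (s / t) • v‖) ^ (1/κ) :=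
              Real.rpow_le_rpow (by positivity) hlow (by positivity)
      have hnorm : ‖(1/t : ℝ) • v‖ = ‖v‖ / t := by
        rw [norm_smul, Real.norm_eq_abs, abs_of_pos (by positivity : (0:ℝ) < 1/t)]; ring
      rw [hnorm]
      rw [div_le_iff₀ ht]
      -- ‖v‖ ≤ U * (xmin+‖ys‖)^{1/κ} * t
      calc ‖v‖ ≤ 1/2 * (U * t) * M ^ (1/κ) := hz
        _ = U * t * (M ^ (1/κ) / 2) := by ring
        _ ≤ U * t * ((xmin + ‖x + (s / t) • v‖) ^ (1/κ)) :=
            mul_le_mul_of_nonneg_left hstep (by positivity)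
        _ = U * (xmin + ‖x + (s / t) • v‖) ^ (1/κ) * t := by ring
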